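/- arXiv:2204.02729 — 2 statements merged into one kernel-verified Lean document; each statement's English description precedes it below -/
import Mathlib

section
/- Let g : ℂ² → ℂ be holomorphic, let ξ* ∈ ℝ² with g(ξ*) = 0, and suppose the partial derivatives a = ∂g/∂ξ₁(ξ*) and b = ∂g/∂ξ₂(ξ*) are real with a² + b² ≠ 0. Let η = (η₁, η₂) ∈ ℝ² satisfy a·η₁ + b·η₂ ≠ 0. Then there exists δ > 0 such that for all t with 0 < t ≤ δ, g(ξ₁* + i t η₁, ξ₂* + i t η₂) ≠ 0. -/
open Complex

/-- If `g` is holomorphic near a real point `ξ*` of its zero set, with real partial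
derivatives `a`, `b` there satisfying `a² + b² ≠ 0`, and `η ∈ ℝ²` satisfies
`a·η₁ + b·η₂ ≠ 0`, then there is `δ > 0` such that `g(ξ* + i t η) ≠ 0` for all
`0 < t ≤ δ`. -/
theorem stmt0 (g : ℂ × ℂ → ℂ) (ξ₁ ξ₂ : ℝ) (hg : AnalyticAt ℂ g ((ξ₁ : ℂ), (ξ₂ : ℂ)))
    (a b : ℝ)
    (ha : fderiv ℂ g ((ξ₁ : ℂ), (ξ₂ : ℂ)) (1, 0) = (a : ℂ))
    (hb : fderiv ℂ g ((ξ₁ : ℂ), (ξ₂ : ℂ)) (0, 1) = (b : ℂ))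
    (hz : g ((ξ₁ : ℂ), (ξ₂ : ℂ)) = 0)
    (hab : a ^ 2 + b ^ 2 ≠ 0)
    (η₁ η₂ : ℝ) (hη : a * η₁ + b * η₂ ≠ 0) :
    ∃ δ > (0 : ℝ), ∀ t : ℝ, 0 < t → t ≤ δ →
      g ((ξ₁ : ℂ) + Complex.I * (t : ℂ) * (η₁ : ℂ),
         (ξ₂ : ℂ) + Complex.I * (t : ℂ) * (η₂ : ℂ)) ≠ 0 := by
  set p : ℂ × ℂ := ((ξ₁ : ℂ), (ξ₂ : ℂ)) with hp
  set L : ℂ → ℂ × ℂ := fun z => ((ξ₁ : ℂ) + Complex.I * (η₁ : ℂ) * z,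
    (ξ₂ : ℂ) + Complex.I * (η₂ : ℂ) * z) with hL
  have hL0 : L 0 = p := by simp [hL, hp]
  have hLd : HasDerivAt L (Complex.I * η₁, Complex.I * η₂) 0 := by
    apply HasDerivAt.prodMk
    · simpa using ((hasDerivAt_id (0 : ℂ)).const_mul (Complex.I * (η₁ : ℂ))).const_add (ξ₁ : ℂ)
    · simpa using ((hasDerivAt_id (0 : ℂ)).const_mul (Complex.I * (η₂ : ℂ))).const_add (ξ₂ : ℂ)
  set f : ℂ → ℂ := fun z => g (L z) with hf
  have hfa : AnalyticAt ℂ f 0 := by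
    apply AnalyticAt.comp
    · rw [hL0]; exact hg
    · apply AnalyticAt.prod
      · exact analyticAt_const.add (analyticAt_const.mul analyticAt_id)
      · exact analyticAt_const.add (analyticAt_const.mul analyticAt_id)
  have hfd : HasDerivAt f (Complex.I * ((a : ℂ) * η₁ + (b : ℂ) * η₂)) 0 := by
    have hgd : HasFDerivAt g (fderiv ℂ g p) (L 0) := by
      rw [hL0]; exact hg.differentiableAt.hasFDerivAt
    have := hgd.comp_hasDerivAt 0 hLd
    refine HasDerivAt.congr_deriv this ?_
    have h1 : ((Complex.I * (η₁ : ℂ), Complex.I * (η₂ : ℂ)) : ℂ × ℂ)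
        = (Complex.I * η₁) • ((1 : ℂ), (0 : ℂ)) + (Complex.I * η₂) • ((0 : ℂ), (1 : ℂ)) := by
      simp [Prod.ext_iff]
    rw [h1, map_add, (fderiv ℂ g p).map_smul, (fderiv ℂ g p).map_smul, ha, hb]
    simp
    ring
  have hderiv_ne : deriv f 0 ≠ 0 := by
    rw [hfd.deriv]
    have : (a : ℂ) * η₁ + (b : ℂ) * η₂ ≠ 0 := by
      intro h
      apply hη
      have : ((a * η₁ + b * η₂ : ℝ) : ℂ) = 0 := by push_cast; linear_combination h
      exact_mod_cast this
    simp [Complex.I_ne_zero, this]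
  rcases hfa.eventually_eq_zero_or_eventually_ne_zero with h | h
  · exfalso
    apply hderiv_ne
    have h' : f =ᶠ[nhds 0] fun _ => (0 : ℂ) := h
    rw [h'.deriv_eq]
    simp
  · rw [eventually_nhdsWithin_iff, Metric.eventually_nhds_iff] at h
    obtain ⟨ε, hε, hball⟩ := h
    refine ⟨ε / 2, by linarith, fun t ht htε => ?_⟩
    have ht0 : (t : ℂ) ≠ 0 := by exact_mod_cast ht.ne'
    have hd : dist (t : ℂ) 0 < ε := by
      rw [Complex.dist_eq, sub_zero]
      simp only [Complex.norm_real, Real.norm_eq_abs]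
      rw [abs_of_pos ht]; linarith
    have := hball hd (by simpa using ht0)
    simpa [hf, hL, mul_comm, mul_assoc, mul_left_comm] using this
end

section
/- Let ρ > 0, β > 0, α ∈ ℝ \ {0}, s ∈ {+1, -1}, and define for ζʳ = (ζ₁ʳ, ζ₂ʳ) ∈ ℝ²: η₁ = -sign(α) β s ζ₁ʳ and η₂ = |α| β s (ρ² - 2(ζ₂ʳ)²). Then Im[s((ζ₂ʳ + iη₂) + α(ζ₁ʳ + iη₁)²)] = |α| β (ρ² - 2((ζ₁ʳ)² + (ζ₂ʳ)²)). In particular this quantity is strictly negative whenever (ζ₁ʳ)² + (ζ₂ʳ)² > ρ²/2, and equals |α| β ρ² > 0 when ζʳ = 0. -/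
open Complex

/-- Key algebraic identity for the deformation near a saddle on a singularity:
with `η₁ = -sign(α)βsζ₁ʳ`, `η₂ = |α|βs(ρ² - 2(ζ₂ʳ)²)`, one has
`Im[s((ζ₂ʳ + iη₂) + α(ζ₁ʳ + iη₁)²)] = |α|β(ρ² - 2((ζ₁ʳ)² + (ζ₂ʳ)²))`; this is
negative when `(ζ₁ʳ)² + (ζ₂ʳ)² > ρ²/2`, and equals `|α|βρ² > 0` at `ζʳ = 0`. -/
theorem stmt14 (ρ β α s : ℝ) (hρ : 0 < ρ) (hβ : 0 < β) (hα : α ≠ 0)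
    (hs : s = 1 ∨ s = -1) (ζ₁ ζ₂ : ℝ) :
    let η₁ : ℝ := -(Real.sign α) * β * s * ζ₁
    let η₂ : ℝ := |α| * β * s * (ρ ^ 2 - 2 * ζ₂ ^ 2)
    (((s : ℂ) * (((ζ₂ : ℂ) + Complex.I * (η₂ : ℂ)) +
        (α : ℂ) * ((ζ₁ : ℂ) + Complex.I * (η₁ : ℂ)) ^ 2)).im
      = |α| * β * (ρ ^ 2 - 2 * (ζ₁ ^ 2 + ζ₂ ^ 2))) ∧
    (ζ₁ ^ 2 + ζ₂ ^ 2 > ρ ^ 2 / 2 → |α| * β * (ρ ^ 2 - 2 * (ζ₁ ^ 2 + ζ₂ ^ 2)) < 0) ∧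
    (ζ₁ = 0 ∧ ζ₂ = 0 →
      |α| * β * (ρ ^ 2 - 2 * (ζ₁ ^ 2 + ζ₂ ^ 2)) = |α| * β * ρ ^ 2 ∧
      0 < |α| * β * ρ ^ 2) := by
  intro η₁ η₂
  have habs : 0 < |α| := abs_pos.mpr hα
  have hsign : Real.sign α * α = |α| := by
    rcases hα.lt_or_gt with h | h
    · rw [Real.sign_of_neg h, abs_of_neg h]; ring
    · rw [Real.sign_of_pos h, abs_of_pos h]; ring
  refine ⟨?_, ?_, ?_⟩
  · simp only [η₁, η₂, Complex.mul_im, Complex.add_im, Complex.add_re,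
      Complex.mul_re, Complex.I_re, Complex.I_im, Complex.ofReal_re,
      Complex.ofReal_im, pow_two]
    rcases hs with h | h <;> subst h <;> linear_combination (-2*β*ζ₁*ζ₁) * hsign
  · intro h; nlinarith [mul_pos habs hβ]
  · rintro ⟨h1, h2⟩
    constructor
    · rw [h1, h2]; ring
    · positivity
end
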